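/- Let m : ℝ → ℝ be C¹ with lim_{z→−∞} m(z) = +1 and lim_{z→+∞} m(z) = −1, and suppose z ↦ (1/2)|m'(z)|² + F(m(z)) is integrable on ℝ. Then ∫_ℝ ((1/2)|m'(z)|² + F(m(z))) dz ≥ ∫_{−1}^{1} √(2F(h)) dh = 2^{3/2}/3. In particular, the planar surface tension S = inf{∫_ℝ ((1/2)|m'|² + F(m)) dz : lim_{z→±∞} m(z) = ∓1} equals 2^{3/2}/3. -/

import Mathlib

open Filter MeasureTheory

noncomputable section

/-- The double-well potential `F(m) = (1/4)(m²-1)²`. -/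
def Fpot (m : ℝ) : ℝ := (1/4) * (m^2 - 1)^2

/-- The one-dimensional free energy of a profile. -/
def oneDimEnergy (m : ℝ → ℝ) : ℝ := ∫ z : ℝ, ((1/2) * (deriv m z)^2 + Fpot (m z))

/-- The planar surface tension: the infimum of the one-dimensional free energy over
profiles connecting `+1` at `-∞` to `-1` at `+∞`. -/
def Stension : ℝ :=
  sInf {e : ℝ | ∃ m : ℝ → ℝ, ContDiff ℝ 1 m ∧
    Tendsto m atBot (nhds 1) ∧ Tendsto m atTop (nhds (-1)) ∧
    Integrable (fun z => (1/2) * (deriv m z)^2 + Fpot (m z)) ∧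
    e = oneDimEnergy m}

/-! ### Auxiliary lemmas -/

lemma rpow_val : (2:ℝ) ^ ((3:ℝ)/2) / 3 = 2 * Real.sqrt 2 / 3 := by
  rw [show ((3:ℝ)/2) = (1:ℝ) + 1/2 by norm_num, Real.rpow_add (by norm_num),
    Real.rpow_one, ← Real.sqrt_eq_rpow]

lemma sqrt_val (h : ℝ) (h1 : -1 ≤ h) (h2 : h ≤ 1) :
    Real.sqrt (2 * Fpot h) = (1 - h^2) / Real.sqrt 2 := by
  have hs : Real.sqrt 2 ^ 2 = 2 := Real.sq_sqrt (by norm_num)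
  have h3 : (0:ℝ) ≤ 1 - h^2 := by nlinarith
  have : 2 * Fpot h = ((1 - h^2)/Real.sqrt 2)^2 := by
    rw [div_pow, hs]; unfold Fpot; ring
  rw [this, Real.sqrt_sq (by positivity)]

open intervalIntegral in
lemma int_val : (∫ h in (-1:ℝ)..1, Real.sqrt (2 * Fpot h)) = 2 * Real.sqrt 2 / 3 := by
  have hs : Real.sqrt 2 ^ 2 = 2 := Real.sq_sqrt (by norm_num)
  have hsp : (0:ℝ) < Real.sqrt 2 := by positivity
  rw [integral_congr (g := fun h => (1 - h^2)/Real.sqrt 2)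
    (by intro x hx; rw [Set.uIcc_of_le (by norm_num)] at hx; exact sqrt_val x hx.1 hx.2)]
  rw [show (fun h:ℝ => (1-h^2)/Real.sqrt 2) = (fun h:ℝ => (1/Real.sqrt 2) * (1 - h^2)) by funext; ring]
  rw [intervalIntegral.integral_const_mul, intervalIntegral.integral_sub intervalIntegrable_const
    (intervalIntegrable_pow 2), integral_pow,
    _root_.intervalIntegral.integral_const]
  norm_num
  field_simp
  nlinarith [hs]

lemma lower_bound (m : ℝ → ℝ) (hC : ContDiff ℝ 1 m)
    (hbot : Tendsto m atBot (nhds 1)) (htop : Tendsto m atTop (nhds (-1)))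
    (hInt : Integrable (fun z => (1/2) * (deriv m z)^2 + Fpot (m z))) :
    2 * Real.sqrt 2 / 3 ≤ ∫ z : ℝ, ((1/2) * (deriv m z)^2 + Fpot (m z)) := by
  set c := Real.sqrt 2 with hc
  have hc2 : c^2 = 2 := Real.sq_sqrt (by norm_num)
  have hcpos : (0:ℝ) < c := Real.sqrt_pos.mpr (by norm_num)
  set Φ : ℝ → ℝ := fun t => (c/2) * (t^3/3 - t) with hΦ
  set ψ : ℝ → ℝ := fun z => Φ (m z) with hψ
  set ψ' : ℝ → ℝ := fun z => (c/2) * ((m z)^2 - 1) * deriv m z with hψ'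
  have hd : ∀ z, HasDerivAt m (deriv m z) z :=
    fun z => (hC.differentiable one_ne_zero z).hasDerivAt
  have hdψ : ∀ z, HasDerivAt ψ (ψ' z) z := by
    intro z
    have h := ((((hd z).pow 3).div_const 3).sub (hd z)).const_mul (c/2)
    refine h.congr_deriv ?_
    push_cast
    ring
  have hpt : ∀ z, ψ' z ≤ (1/2) * (deriv m z)^2 + Fpot (m z) := by
    intro z
    simp only [hψ', Fpot]
    nlinarith [sq_nonneg (deriv m z - c*((m z)^2-1)/2), hc2, hcpos]
  have habs : ∀ z, |ψ' z| ≤ (1/2) * (deriv m z)^2 + Fpot (m z) := by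
    intro z
    rw [abs_le]
    constructor
    · simp only [hψ', Fpot]
      nlinarith [sq_nonneg (deriv m z + c*((m z)^2-1)/2), hc2, hcpos]
    · exact hpt z
  have hcont : Continuous ψ' :=
    (continuous_const.mul ((hC.continuous.pow 2).sub continuous_const)).mul
      (hC.continuous_deriv le_rfl)
  have hint' : Integrable ψ' :=
    hInt.mono' hcont.aestronglyMeasurable
      (Filter.Eventually.of_forall fun z => by rw [Real.norm_eq_abs]; exact habs z)
  have hΦc : Continuous Φ := by fun_prop
  have hlb : Tendsto ψ atBot (nhds (Φ 1)) := (hΦc.tendsto 1).comp hbot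
  have hlt : Tendsto ψ atTop (nhds (Φ (-1))) := (hΦc.tendsto (-1)).comp htop
  have key : ∫ z, ψ' z = Φ (-1) - Φ 1 :=
    integral_of_hasDerivAt_of_tendsto hdψ hint' hlb hlt
  have hval : Φ (-1) - Φ 1 = 2 * c / 3 := by simp only [hΦ]; ring
  calc 2 * Real.sqrt 2 / 3 = ∫ z, ψ' z := by rw [key, hval, hc]
    _ ≤ ∫ z : ℝ, ((1/2) * (deriv m z)^2 + Fpot (m z)) := integral_mono hint' hInt hpt

/-! ### The optimal profile -/

def mopt (z : ℝ) : ℝ := 2 / (1 + Real.exp (Real.sqrt 2 * z)) - 1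

def Eopt (z : ℝ) : ℝ := 8 * Real.exp (Real.sqrt 2 * z)^2 / (1 + Real.exp (Real.sqrt 2 * z))^4

lemma hden (z : ℝ) : (1 + Real.exp (Real.sqrt 2 * z)) ≠ 0 := by positivity

lemma mopt_hasDeriv (z : ℝ) : HasDerivAt mopt
    (-2 * Real.sqrt 2 * Real.exp (Real.sqrt 2 * z) / (1 + Real.exp (Real.sqrt 2 * z))^2) z := by
  have h1 : HasDerivAt (fun z : ℝ => Real.sqrt 2 * z) (Real.sqrt 2) z := by
    simpa using (hasDerivAt_id z).const_mul (Real.sqrt 2)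
  have h3 : HasDerivAt (fun z : ℝ => 1 + Real.exp (Real.sqrt 2 * z))
      (Real.exp (Real.sqrt 2 * z) * Real.sqrt 2) z := h1.exp.const_add 1
  have h4 := ((hasDerivAt_const z (2:ℝ)).div h3 (hden z)).sub_const 1
  refine h4.congr_deriv ?_
  field_simp
  ring

lemma mopt_contDiff : ContDiff ℝ 1 mopt := by
  apply ContDiff.sub _ contDiff_const
  apply ContDiff.div contDiff_const
  · exact ContDiff.add contDiff_const (Real.contDiff_exp.comp (contDiff_const.mul contDiff_id))
  · exact hden

lemma mopt_deriv (z : ℝ) : deriv mopt z =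
    -2 * Real.sqrt 2 * Real.exp (Real.sqrt 2 * z) / (1 + Real.exp (Real.sqrt 2 * z))^2 :=
  (mopt_hasDeriv z).deriv

lemma mopt_energy (z : ℝ) : (1/2) * (deriv mopt z)^2 + Fpot (mopt z) = Eopt z := by
  have hc2 : Real.sqrt 2 ^ 2 = 2 := Real.sq_sqrt (by norm_num)
  rw [mopt_deriv]
  simp only [Fpot, mopt, Eopt]
  have hg := hden z
  set g := Real.exp (Real.sqrt 2 * z)
  have hnum : (-2 * Real.sqrt 2 * g)^2 = 8 * g^2 := by linear_combination (4*g^2) * hc2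
  rw [div_pow, hnum]
  field_simp
  ring

lemma mopt_tendsto_bot : Tendsto mopt atBot (nhds 1) := by
  have h1 : Tendsto (fun z : ℝ => Real.exp (Real.sqrt 2 * z)) atBot (nhds 0) := by
    apply Real.tendsto_exp_atBot.comp
    exact (tendsto_const_mul_atBot_of_pos (by positivity)).mpr tendsto_id
  have h2 : Tendsto mopt atBot (nhds (2 / (1 + 0) - 1)) := by
    apply Tendsto.sub_const
    exact tendsto_const_nhds.div (tendsto_const_nhds.add h1) (by norm_num)
  norm_num at h2
  exact h2

lemma mopt_tendsto_top : Tendsto mopt atTop (nhds (-1)) := by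
  have h1 : Tendsto (fun z : ℝ => 1 + Real.exp (Real.sqrt 2 * z)) atTop atTop := by
    apply tendsto_atTop_add_const_left
    apply Real.tendsto_exp_atTop.comp
    exact (tendsto_const_mul_atTop_of_pos (by positivity)).mpr tendsto_id
  have h2 : Tendsto mopt atTop (nhds (2 * 0 - 1)) := by
    apply Tendsto.sub_const
    have := h1.inv_tendsto_atTop
    simpa [div_eq_mul_inv] using (tendsto_const_nhds (x := (2:ℝ))).mul this
  simpa using h2

lemma eopt_cont : Continuous Eopt := by
  apply Continuous.div
  · fun_prop
  · fun_prop
  · intro z; positivity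

lemma eopt_integrable : Integrable Eopt := by
  have hc2 : Real.sqrt 2 ^ 2 = 2 := Real.sq_sqrt (by norm_num)
  have h1s : (1:ℝ) ≤ Real.sqrt 2 := by nlinarith [Real.sqrt_nonneg 2]
  rw [← integrableOn_univ, ← Set.Iic_union_Ioi (a := (0:ℝ))]
  apply IntegrableOn.union
  · apply Integrable.mono' ((integrableOn_exp_Iic 0).const_mul 8)
      (eopt_cont.aestronglyMeasurable.restrict)
    rw [ae_restrict_iff' measurableSet_Iic]
    apply Filter.Eventually.of_forall
    intro z hz
    simp only [Set.mem_Iic] at hz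
    set g := Real.exp (Real.sqrt 2 * z) with hg
    have hgpos : 0 < g := Real.exp_pos _
    have hg1 : g ≤ Real.exp z := Real.exp_le_exp.mpr (by nlinarith)
    have hgle1 : g ≤ 1 := Real.exp_le_one_iff.mpr (by nlinarith)
    rw [Real.norm_eq_abs, abs_of_nonneg (by unfold Eopt; positivity)]
    unfold Eopt
    calc 8 * g^2 / (1+g)^4 ≤ 8 * g^2 := div_le_self (by positivity)
          (one_le_pow₀ (by linarith))
      _ ≤ 8 * Real.exp z := by nlinarith
  · have hbnd : IntegrableOn (fun x : ℝ => 8 * Real.exp (-x)) (Set.Ioi 0) := by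
      have := (exp_neg_integrableOn_Ioi 0 one_pos).const_mul 8
      simp only [neg_one_mul] at this; exact this
    apply Integrable.mono' hbnd (eopt_cont.aestronglyMeasurable.restrict)
    rw [ae_restrict_iff' measurableSet_Ioi]
    apply Filter.Eventually.of_forall
    intro z hz
    simp only [Set.mem_Ioi] at hz
    set g := Real.exp (Real.sqrt 2 * z) with hg
    set E := Real.exp (-z) with hE
    have hgpos : 0 < g := Real.exp_pos _
    have hEpos : 0 < E := Real.exp_pos _
    have hge1 : 1 ≤ g := Real.one_le_exp (by nlinarith)
    have hEg : 1 ≤ E * g := by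
      rw [hE, hg, ← Real.exp_add]
      exact Real.one_le_exp (by nlinarith)
    rw [Real.norm_eq_abs, abs_of_nonneg (by unfold Eopt; positivity)]
    unfold Eopt
    rw [div_le_iff₀ (by positivity)]
    calc 8 * g^2 ≤ 8 * g^3 := by nlinarith
      _ = 8 * (g^3 * 1) := by ring
      _ ≤ 8 * (g^3 * (E * g)) := by nlinarith [pow_pos hgpos 3]
      _ = 8 * E * g^4 := by ring
      _ ≤ 8 * E * (1+g)^4 := by
          have := pow_le_pow_left₀ hgpos.le (by linarith : g ≤ 1+g) 4
          nlinarith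

lemma mopt_energy_integrable :
    Integrable (fun z => (1/2) * (deriv mopt z)^2 + Fpot (mopt z)) := by
  rw [funext mopt_energy]
  exact eopt_integrable

lemma mopt_energy_value : oneDimEnergy mopt = 2 * Real.sqrt 2 / 3 := by
  set c := Real.sqrt 2 with hc
  have hc2 : c^2 = 2 := Real.sq_sqrt (by norm_num)
  set Φ : ℝ → ℝ := fun t => (c/2) * (t^3/3 - t) with hΦ
  have hΦc : Continuous Φ := by fun_prop
  have hd : ∀ z, HasDerivAt (fun z => Φ (mopt z)) (Eopt z) z := by
    intro z
    have hm := mopt_hasDeriv z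
    have h := (((hm.pow 3).div_const 3).sub hm).const_mul (c/2)
    refine h.congr_deriv ?_
    have hg := hden z
    set g := Real.exp (c * z) with hg'
    have hm2 : (mopt z)^2 - 1 = -4*g/(1+g)^2 := by
      simp only [mopt, ← hc]; rw [← hg']; field_simp; ring
    have key : Eopt z = (c/2) * ((mopt z)^2 - 1) * (-2*c*g/(1+g)^2) := by
      rw [hm2]
      unfold Eopt
      rw [show (c/2) * (-4*g/(1+g)^2) * (-2*c*g/(1+g)^2)
          = c^2 * (4*g^2/((1+g)^2*(1+g)^2)) from by field_simp, hc2, ← hg',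
        show (1+g)^2*(1+g)^2 = (1+g)^4 from by ring]
      ring
    rw [key]
    push_cast
    ring
  have hb : Tendsto (fun z => Φ (mopt z)) atBot (nhds (Φ 1)) :=
    (hΦc.tendsto 1).comp mopt_tendsto_bot
  have ht : Tendsto (fun z => Φ (mopt z)) atTop (nhds (Φ (-1))) :=
    (hΦc.tendsto (-1)).comp mopt_tendsto_top
  unfold oneDimEnergy
  rw [funext mopt_energy, integral_of_hasDerivAt_of_tendsto hd eopt_integrable hb ht]
  simp only [hΦ]
  ring

/-- Lower bound for the planar free energy of any transition profile, and the value
`S = ∫_{-1}^1 √(2F(h)) dh = 2^{3/2}/3` of the planar surface tension. -/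
theorem surface_tension_value :
    (∀ m : ℝ → ℝ, ContDiff ℝ 1 m →
      Tendsto m atBot (nhds 1) → Tendsto m atTop (nhds (-1)) →
      Integrable (fun z => (1/2) * (deriv m z)^2 + Fpot (m z)) →
      (∫ h in (-1:ℝ)..1, Real.sqrt (2 * Fpot h)) ≤ oneDimEnergy m) ∧
    (∫ h in (-1:ℝ)..1, Real.sqrt (2 * Fpot h)) = (2:ℝ) ^ ((3:ℝ)/2) / 3 ∧
    Stension = (2:ℝ) ^ ((3:ℝ)/2) / 3 := by
  refine ⟨?_, ?_, ?_⟩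
  · intro m hC hb ht hI
    rw [int_val]
    exact lower_bound m hC hb ht hI
  · rw [int_val, rpow_val]
  · rw [show (2:ℝ) ^ ((3:ℝ)/2) / 3 = 2 * Real.sqrt 2 / 3 from rpow_val]
    have hmem : (2 * Real.sqrt 2 / 3) ∈ {e : ℝ | ∃ m : ℝ → ℝ, ContDiff ℝ 1 m ∧
        Tendsto m atBot (nhds 1) ∧ Tendsto m atTop (nhds (-1)) ∧
        Integrable (fun z => (1/2) * (deriv m z)^2 + Fpot (m z)) ∧
        e = oneDimEnergy m} :=
      ⟨mopt, mopt_contDiff, mopt_tendsto_bot, mopt_tendsto_top,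
        mopt_energy_integrable, mopt_energy_value.symm⟩
    have hlb : ∀ e ∈ {e : ℝ | ∃ m : ℝ → ℝ, ContDiff ℝ 1 m ∧
        Tendsto m atBot (nhds 1) ∧ Tendsto m atTop (nhds (-1)) ∧
        Integrable (fun z => (1/2) * (deriv m z)^2 + Fpot (m z)) ∧
        e = oneDimEnergy m}, 2 * Real.sqrt 2 / 3 ≤ e := by
      rintro e ⟨m, hC, hb, ht, hI, rfl⟩
      exact lower_bound m hC hb ht hI
    exact le_antisymm (csInf_le ⟨_, hlb⟩ hmem) (le_csInf ⟨_, hmem⟩ hlb)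

end
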